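/- Let J ∈ ℝ^{2N×2N} be an invertible skew-symmetric matrix, let H : ℝ → ℝ^{2N×2N} be such that H(t) is symmetric for every t, let U ∈ ℝ^{2N×k} satisfy UᵀJU = 0, and let X : ℝ → ℝ^{2N×2N} be differentiable with J·X′(t) = H(t)·X(t) for all t. Then X̃(t) = (I + UUᵀJ)X(t) is differentiable and satisfies the perturbed Hamiltonian system J·X̃′(t) = (H(t) + E(t))·X̃(t) for all t, where E(t) = (JUUᵀH(t))ᵀ + JUUᵀH(t) + (UUᵀJ)ᵀ H(t) (UUᵀJ). -/

import Mathlib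

open Matrix

/-- If `X` solves the Hamiltonian system `J X' = H X`, then `X̃ = (I + UUᵀJ)X` solves the
perturbed Hamiltonian system `J X̃' = (H + E) X̃` with
`E = (JUUᵀH)ᵀ + JUUᵀH + (UUᵀJ)ᵀ H (UUᵀJ)`. -/
theorem perturbed_solution_solves_perturbed_system {N k : ℕ}
    (J : Matrix (Fin (2 * N)) (Fin (2 * N)) ℝ)
    (hJskew : Jᵀ = -J) (hJinv : IsUnit J)
    (H : ℝ → Matrix (Fin (2 * N)) (Fin (2 * N)) ℝ)
    (hH : ∀ t, (H t)ᵀ = H t)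
    (U : Matrix (Fin (2 * N)) (Fin k) ℝ) (hU : Uᵀ * J * U = 0)
    (X X' : ℝ → Matrix (Fin (2 * N)) (Fin (2 * N)) ℝ)
    (hX : ∀ t, ∀ i j, HasDerivAt (fun s => X s i j) (X' t i j) t)
    (hsys : ∀ t, J * X' t = H t * X t) :
    ∀ t, (∀ i j, HasDerivAt (fun s => ((1 + U * Uᵀ * J) * X s : Matrix (Fin (2 * N)) (Fin (2 * N)) ℝ) i j)
            (((1 + U * Uᵀ * J) * X' t : Matrix (Fin (2 * N)) (Fin (2 * N)) ℝ) i j) t) ∧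
      J * ((1 + U * Uᵀ * J) * X' t) =
        (H t + ((J * U * Uᵀ * H t)ᵀ + J * U * Uᵀ * H t
            + (U * Uᵀ * J)ᵀ * H t * (U * Uᵀ * J))) * ((1 + U * Uᵀ * J) * X t) := by

  intro t
  have h0 : ∀ (B : Matrix (Fin k) (Fin (2*N)) ℝ), Uᵀ * (J * (U * B)) = 0 := by
    intro B
    rw [← Matrix.mul_assoc, ← Matrix.mul_assoc, hU, Matrix.zero_mul]
  constructor
  · intro i j
    simp only [Matrix.mul_apply]
    exact HasDerivAt.fun_sum fun l _ => (hX t l j).const_mul _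
  · have hs : J * X' t = H t * X t := hsys t
    have lhs_eq : J * ((1 + U * Uᵀ * J) * X' t)
        = H t * X t + J * (U * (Uᵀ * (H t * X t))) := by
      rw [Matrix.add_mul, Matrix.one_mul, Matrix.mul_add, hs]
      simp only [Matrix.mul_assoc, hs]
    rw [lhs_eq]
    simp only [Matrix.transpose_mul, Matrix.transpose_transpose, hJskew, hH t,
      Matrix.mul_add, Matrix.add_mul, Matrix.mul_one, Matrix.one_mul,
      Matrix.neg_mul, Matrix.mul_neg, Matrix.mul_assoc, h0, hU,
      Matrix.zero_mul, Matrix.mul_zero, neg_zero, smul_zero]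
    abel
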